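/- arXiv:2305.15863 — 3 statements merged into one kernel-verified Lean document; each statement's English description precedes it below -/
import Mathlib

section
/- Let M > 0, μ ∈ (0, M], c ≥ 1, and let k be a positive integer. Let N be a positive integer and X_1, ..., X_N independent random variables, each taking values in [0, M] almost surely and each satisfying E[X_j] ≥ μ. Then E[(Σ_{j=1}^N X_j + c)^{−k}] ≤ 2·exp(−N·μ² / (2·M²)) + 2^k / (N·μ)^k. -/
open MeasureTheory ProbabilityTheory

open Real in

lemma bernoulli_hoeffding (p : ℝ) (hp0 : 0 ≤ p) (hp1 : p ≤ 1) {s : ℝ} (hs : s ≤ 0) :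
    1 - p + p * Real.exp s ≤ Real.exp (p * s + s ^ 2 / 8) := by
  set D : ℝ → ℝ := fun s => 1 - p + p * Real.exp s with hDdef
  have hD : ∀ x : ℝ, 0 < D x := by
    intro x
    rcases hp0.eq_or_lt with h | h
    · simp [hDdef, ← h]
    · have h1 : 0 ≤ 1 - p := by linarith
      have h2 : 0 < p * Real.exp x := mul_pos h (exp_pos x)
      simp only [hDdef]; linarith
  set φ : ℝ → ℝ := fun s => p * s + s ^ 2 / 8 - Real.log (D s) with hφdef
  set g : ℝ → ℝ := fun s => p + s / 4 - p * Real.exp s / D s with hgdef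
  have hDderiv : ∀ x : ℝ, HasDerivAt D (p * Real.exp x) x := by
    intro x
    exact ((Real.hasDerivAt_exp x).const_mul p).const_add (1 - p)
  have hφderiv : ∀ x : ℝ, HasDerivAt φ (g x) x := by
    intro x
    have h2 : HasDerivAt (fun s : ℝ => p * s) p x := by
      simpa using (hasDerivAt_id x).const_mul p
    have h1 : HasDerivAt (fun s : ℝ => p * s + s ^ 2 / 8) (p + x / 4) x := by
      have := h2.add ((hasDerivAt_pow 2 x).div_const 8)
      refine this.congr_deriv ?_
      norm_num [show (2:ℕ) - 1 = 1 from rfl]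
      ring
    have h3 : HasDerivAt (fun s => Real.log (D s)) (p * Real.exp x / D x) x :=
      (hDderiv x).log (hD x).ne'
    exact h1.sub h3
  have hgderiv : ∀ x : ℝ, HasDerivAt g
      (1 / 4 - (p * Real.exp x * D x - p * Real.exp x * (p * Real.exp x)) / (D x) ^ 2) x := by
    intro x
    have h1 : HasDerivAt (fun s : ℝ => p + s / 4) (1 / 4) x := by
      simpa using ((hasDerivAt_id x).div_const 4).const_add p
    have h2 : HasDerivAt (fun s : ℝ => p * Real.exp s) (p * Real.exp x) x :=
      (Real.hasDerivAt_exp x).const_mul p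
    have h3 := h2.div (hDderiv x) (hD x).ne'
    exact h1.sub h3
  have hgderiv_nonneg : ∀ x : ℝ,
      0 ≤ 1 / 4 - (p * Real.exp x * D x - p * Real.exp x * (p * Real.exp x)) / (D x) ^ 2 := by
    intro x
    have hDx := hD x
    rw [sub_nonneg, div_le_iff₀ (by positivity)]
    have key : p * Real.exp x * D x - p * Real.exp x * (p * Real.exp x)
        = (1 - p) * (p * Real.exp x) := by simp only [hDdef]; ring
    have hDxe : D x = (1 - p) + p * Real.exp x := rfl
    rw [key, hDxe]
    nlinarith [sq_nonneg ((1 - p) - p * Real.exp x)]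
  have hgmono : Monotone g :=
    monotone_of_deriv_nonneg (fun x => (hgderiv x).differentiableAt) (fun x => by
      rw [(hgderiv x).deriv]; exact hgderiv_nonneg x)
  have hg0 : g 0 = 0 := by
    simp [hgdef, hDdef]
  have hφ_nonneg : 0 ≤ φ s := by
    have hanti : AntitoneOn φ (Set.Iic (0 : ℝ)) := by
      refine antitoneOn_of_deriv_nonpos (convex_Iic 0)
        (fun x _ => ((hφderiv x).differentiableAt.continuousAt).continuousWithinAt)
        (fun x _ => (hφderiv x).differentiableAt.differentiableWithinAt) ?_
      intro x hx
      rw [(hφderiv x).deriv]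
      have h4 : g x ≤ g 0 := hgmono (le_of_lt (by simpa using hx))
      linarith [hg0 ▸ h4]
    have hφ0 : φ 0 = 0 := by simp [hφdef, hDdef]
    have := hanti (Set.mem_Iic.2 hs) (Set.mem_Iic.2 le_rfl) hs
    linarith [hφ0 ▸ this]
  have hDs := hD s
  have hlog : Real.log (D s) ≤ p * s + s ^ 2 / 8 := by
    simp only [hφdef] at hφ_nonneg; linarith
  calc 1 - p + p * Real.exp s = D s := rfl
    _ ≤ Real.exp (p * s + s ^ 2 / 8) := by
        rw [← Real.exp_log hDs]; exact Real.exp_le_exp.2 hlog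


open Real in
lemma mgf_bound_of_Icc {Ω : Type} [MeasurableSpace Ω] (P : Measure Ω) [IsProbabilityMeasure P]
    (M μ t : ℝ) (hM : 0 < M) (hμ : 0 < μ) (hμM : μ ≤ M) (ht : t ≤ 0)
    (Y : Ω → ℝ) (hmeas : Measurable Y) (hrange : ∀ᵐ ω ∂P, Y ω ∈ Set.Icc 0 M)
    (hmean : μ ≤ ∫ ω, Y ω ∂P) :
    mgf Y P t ≤ Real.exp (t * μ + t ^ 2 * M ^ 2 / 8) := by
  have hYint : Integrable Y P := by
    refine (integrable_const M).mono' hmeas.aestronglyMeasurable ?_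
    filter_upwards [hrange] with ω hω
    rw [Real.norm_eq_abs, abs_of_nonneg hω.1]; exact hω.2
  have hRHSint : Integrable (fun ω => 1 + (Real.exp (t * M) - 1) / M * Y ω) P :=
    (integrable_const 1).add (hYint.const_mul _)
  have hptw : ∀ᵐ ω ∂P, Real.exp (t * Y ω) ≤ 1 + (Real.exp (t * M) - 1) / M * Y ω := by
    filter_upwards [hrange] with ω hω
    set lam := Y ω / M with hlam
    have hl0 : 0 ≤ lam := div_nonneg hω.1 hM.le
    have hl1 : lam ≤ 1 := by rw [hlam, div_le_one hM]; exact hω.2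
    have hconv := convexOn_exp.2 (Set.mem_univ (0 : ℝ)) (Set.mem_univ (t * M))
      (by linarith : (0:ℝ) ≤ 1 - lam) hl0 (by ring)
    have harg : (1 - lam) • (0:ℝ) + lam • (t * M) = t * Y ω := by
      simp only [smul_eq_mul, hlam]; field_simp; ring
    rw [harg] at hconv
    simp only [smul_eq_mul, Real.exp_zero, mul_one] at hconv
    calc Real.exp (t * Y ω) ≤ (1 - lam) * 1 + lam * Real.exp (t * M) := by
          simpa using hconv
      _ = 1 + (Real.exp (t * M) - 1) / M * Y ω := by
          simp only [hlam]; field_simp; ring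
  have hmgf : mgf Y P t ≤ 1 + (Real.exp (t * M) - 1) / M * ∫ ω, Y ω ∂P := by
    have := integral_mono_of_nonneg (ae_of_all _ fun ω => (Real.exp_pos _).le) hRHSint hptw
    calc mgf Y P t = ∫ ω, Real.exp (t * Y ω) ∂P := rfl
      _ ≤ ∫ ω, (1 + (Real.exp (t * M) - 1) / M * Y ω) ∂P := this
      _ = 1 + (Real.exp (t * M) - 1) / M * ∫ ω, Y ω ∂P := by
          rw [integral_add (integrable_const 1) (hYint.const_mul _), integral_const,
            integral_const_mul]
          simp
  have hexp_le : Real.exp (t * M) - 1 ≤ 0 := by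
    have : Real.exp (t * M) ≤ 1 := Real.exp_le_one_iff.2 (mul_nonpos_of_nonpos_of_nonneg ht hM.le)
    linarith
  have hmono : 1 + (Real.exp (t * M) - 1) / M * ∫ ω, Y ω ∂P
      ≤ 1 - μ / M + μ / M * Real.exp (t * M) := by
    have h1 : (Real.exp (t * M) - 1) / M * ∫ ω, Y ω ∂P ≤ (Real.exp (t * M) - 1) / M * μ := by
      apply mul_le_mul_of_nonpos_left hmean
      exact div_nonpos_of_nonpos_of_nonneg hexp_le hM.le
    have h2 : 1 + (Real.exp (t * M) - 1) / M * μ = 1 - μ / M + μ / M * Real.exp (t * M) := by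
      field_simp; ring
    linarith
  have hbern := bernoulli_hoeffding (μ / M) (div_nonneg hμ.le hM.le)
    ((div_le_one hM).2 hμM) (s := t * M) (mul_nonpos_of_nonpos_of_nonneg ht hM.le)
  have heq : μ / M * (t * M) + (t * M) ^ 2 / 8 = t * μ + t ^ 2 * M ^ 2 / 8 := by
    field_simp
  rw [heq] at hbern
  linarith

open Real in
/-- Chernoff-type moment bound, explicit form: For independent random
variables `X_1, …, X_N` with values in `[0, M]` a.s. and means at least `μ ∈ (0, M]`,
and `c ≥ 1`, `k ≥ 1`,
`E[(Σ_j X_j + c)^{-k}] ≤ 2 exp(- N μ² / (2 M²)) + 2^k / (N μ)^k`. -/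
theorem negative_moment_upper_bound
    {Ω : Type} [MeasurableSpace Ω] (P : Measure Ω) [IsProbabilityMeasure P]
    (M μ c : ℝ) (hM : 0 < M) (hμ : 0 < μ) (hμM : μ ≤ M) (hc : 1 ≤ c)
    (k : ℕ) (hk : 0 < k)
    (N : ℕ) (hN : 0 < N)
    (X : Fin N → Ω → ℝ)
    (hXmeas : ∀ j, Measurable (X j))
    (hindep : iIndepFun X P)
    (hXrange : ∀ j, ∀ᵐ ω ∂P, X j ω ∈ Set.Icc 0 M)
    (hXmean : ∀ j, μ ≤ ∫ ω, X j ω ∂P) :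
    ∫ ω, ((∑ j, X j ω + c) ^ k)⁻¹ ∂P
      ≤ 2 * Real.exp (-(N * μ ^ 2) / (2 * M ^ 2)) + 2 ^ k / (N * μ) ^ k := by
  set t : ℝ := -(2 * μ / M ^ 2) with ht_def
  have ht : t ≤ 0 := by
    rw [ht_def, neg_nonpos]; positivity
  -- integrability of exp(t * X j)
  have h_int : ∀ j, Integrable (fun ω => Real.exp (t * X j ω)) P := by
    intro j
    refine (integrable_const (1:ℝ)).mono'
      (((hXmeas j).const_mul t).exp.aestronglyMeasurable) ?_
    filter_upwards [hXrange j] with ω hω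
    rw [Real.norm_eq_abs, abs_of_pos (Real.exp_pos _)]
    exact Real.exp_le_one_iff.2 (mul_nonpos_of_nonpos_of_nonneg ht hω.1)
  -- Chernoff bound
  have hmgf_sum : mgf (∑ j, X j) P t = ∏ j, mgf (X j) P t :=
    hindep.mgf_sum hXmeas Finset.univ
  have hmgf_j : ∀ j, mgf (X j) P t ≤ Real.exp (t * μ + t ^ 2 * M ^ 2 / 8) := fun j =>
    mgf_bound_of_Icc P M μ t hM hμ hμM ht (X j) (hXmeas j) (hXrange j) (hXmean j)
  have hprod : ∏ j, mgf (X j) P t ≤ Real.exp (t * μ + t ^ 2 * M ^ 2 / 8) ^ N := by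
    calc ∏ j, mgf (X j) P t ≤ ∏ _j : Fin N, Real.exp (t * μ + t ^ 2 * M ^ 2 / 8) :=
          Finset.prod_le_prod (fun j _ => mgf_nonneg) (fun j _ => hmgf_j j)
      _ = Real.exp (t * μ + t ^ 2 * M ^ 2 / 8) ^ N := by simp
  have hchern := measure_le_le_exp_mul_mgf (μ := P) (X := ∑ j, X j) (t := t)
    (N * μ / 2) ht (hindep.integrable_exp_mul_sum hXmeas (fun j _ => h_int j))
  have htail : (P {ω | ∑ j, X j ω ≤ N * μ / 2}).toReal
      ≤ Real.exp (-(N * μ ^ 2) / (2 * M ^ 2)) := by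
    have hset : {ω | (∑ j, X j) ω ≤ N * μ / 2} = {ω | ∑ j, X j ω ≤ N * μ / 2} := by
      simp [Finset.sum_apply]
    rw [hset] at hchern
    refine hchern.trans ?_
    rw [hmgf_sum]
    calc Real.exp (-t * (N * μ / 2)) * ∏ j, mgf (X j) P t
        ≤ Real.exp (-t * (N * μ / 2)) * Real.exp (t * μ + t ^ 2 * M ^ 2 / 8) ^ N := by
          exact mul_le_mul_of_nonneg_left hprod (Real.exp_pos _).le
      _ = Real.exp (-t * (N * μ / 2) + N * (t * μ + t ^ 2 * M ^ 2 / 8)) := by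
          rw [← Real.exp_nat_mul, ← Real.exp_add]
      _ = Real.exp (-(N * μ ^ 2) / (2 * M ^ 2)) := by
          congr 1
          rw [ht_def]
          field_simp
          ring
  -- pointwise bound and integration
  set A : Set Ω := {ω | ∑ j, X j ω ≤ N * μ / 2} with hA_def
  have hA_meas : MeasurableSet A :=
    measurableSet_le (Finset.measurable_sum Finset.univ fun j _ => hXmeas j) measurable_const
  have hNμ : (0:ℝ) < N * μ / 2 := by positivity
  have hae : ∀ᵐ ω ∂P, ∀ j, X j ω ∈ Set.Icc 0 M := ae_all_iff.2 hXrange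
  have hbound : ∀ᵐ ω ∂P, ((∑ j, X j ω + c) ^ k)⁻¹
      ≤ A.indicator (fun _ => (1:ℝ)) ω + 2 ^ k / (N * μ) ^ k := by
    filter_upwards [hae] with ω hω
    have hS0 : 0 ≤ ∑ j, X j ω := Finset.sum_nonneg fun j _ => (hω j).1
    have hc1 : 1 ≤ ∑ j, X j ω + c := by linarith
    have hterm : (0:ℝ) ≤ 2 ^ k / (N * μ) ^ k := by positivity
    by_cases hmem : ω ∈ A
    · have h1 : (1:ℝ) ≤ (∑ j, X j ω + c) ^ k := one_le_pow₀ hc1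
      have : ((∑ j, X j ω + c) ^ k)⁻¹ ≤ 1 := inv_le_one_of_one_le₀ h1
      rw [Set.indicator_of_mem hmem]
      linarith
    · have hgt : N * μ / 2 < ∑ j, X j ω := not_le.1 hmem
      have hle : N * μ / 2 ≤ ∑ j, X j ω + c := by linarith
      have hpow : (N * μ / 2) ^ k ≤ (∑ j, X j ω + c) ^ k :=
        pow_le_pow_left₀ hNμ.le hle k
      have hinv : ((∑ j, X j ω + c) ^ k)⁻¹ ≤ ((N * μ / 2) ^ k)⁻¹ :=
        inv_anti₀ (by positivity) hpow
      have heq2 : ((N * μ / 2) ^ k)⁻¹ = 2 ^ k / (N * μ) ^ k := by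
        rw [div_pow, inv_div]
      rw [heq2] at hinv
      rw [Set.indicator_of_notMem hmem]
      linarith
  have hf_nonneg : ∀ᵐ ω ∂P, 0 ≤ ((∑ j, X j ω + c) ^ k)⁻¹ := by
    filter_upwards [hae] with ω hω
    have hS0 : 0 ≤ ∑ j, X j ω := Finset.sum_nonneg fun j _ => (hω j).1
    have : (0:ℝ) < ∑ j, X j ω + c := by linarith
    positivity
  have hg_int : Integrable (fun ω => A.indicator (fun _ => (1:ℝ)) ω + 2 ^ k / (N * μ) ^ k) P :=
    ((integrable_const (1:ℝ)).indicator hA_meas).add (integrable_const _)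
  calc ∫ ω, ((∑ j, X j ω + c) ^ k)⁻¹ ∂P
      ≤ ∫ ω, (A.indicator (fun _ => (1:ℝ)) ω + 2 ^ k / (N * μ) ^ k) ∂P :=
        integral_mono_of_nonneg hf_nonneg hg_int hbound
    _ = (P A).toReal + 2 ^ k / (N * μ) ^ k := by
        rw [integral_add ((integrable_const (1:ℝ)).indicator hA_meas) (integrable_const _),
          integral_indicator_const _ hA_meas, integral_const]
        simp
        rfl
    _ ≤ 2 * Real.exp (-(N * μ ^ 2) / (2 * M ^ 2)) + 2 ^ k / (N * μ) ^ k := by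
        have := htail
        have hpos := Real.exp_pos (-(N * μ ^ 2) / (2 * M ^ 2))
        rw [hA_def]
        linarith
end

section
/- Let M > 0, μ ∈ (0, M], c ≥ 1, and let k be a positive integer. Then there exist constants C_1, C_2 > 0, depending only on μ, M, c and k, such that for every positive integer N and every collection X_1, ..., X_N of independent random variables, each taking values in [0, M] almost surely and each satisfying E[X_j] ≥ μ, one has C_1 / N^k ≤ E[(Σ_{j=1}^N X_j + c)^{−k}] ≤ C_2 / N^k. -/
open MeasureTheory ProbabilityTheory
section AuxNMTB
open Real

lemma exp_neg_le_quad {x : ℝ} (hx : 0 ≤ x) :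
    Real.exp (-x) ≤ 1 - x + x ^ 2 / 2 := by
  have h2 := Real.quadratic_le_exp_of_nonneg hx
  have h3 := Real.exp_pos x
  have hq : (0:ℝ) ≤ 1 - x + x ^ 2 / 2 := by nlinarith [sq_nonneg (x - 1)]
  have key : 1 ≤ (1 - x + x ^ 2 / 2) * Real.exp x := by
    have := mul_le_mul_of_nonneg_left h2 hq
    nlinarith [sq_nonneg (x^2)]
  have hmul : Real.exp (-x) * Real.exp x = 1 := by
    rw [← Real.exp_add]; simp
  exact le_of_mul_le_mul_right (by rw [hmul]; exact key) h3

lemma mgf_le_of_mean (M μ : ℝ) (hM : 0 < M) (hμ : 0 < μ) (hμM : μ ≤ M)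
    {Ω : Type} [MeasurableSpace Ω] (P : Measure Ω) [IsProbabilityMeasure P]
    (X : Ω → ℝ) (hXm : Measurable X) (hXb : ∀ᵐ ω ∂P, X ω ∈ Set.Icc 0 M)
    (hmean : μ ≤ ∫ ω, X ω ∂P) :
    mgf X P (-(μ / M ^ 2)) ≤ 1 - μ ^ 2 / (2 * M ^ 2) := by
  set u : ℝ := μ / M ^ 2 with hu_def
  have hu : 0 < u := by positivity
  have huM : u * M ≤ 1 := by
    rw [hu_def]
    have : μ / M ^ 2 * M = μ / M := by field_simp
    rw [this]
    exact (div_le_one hM).2 hμM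
  have huμ : μ ^ 2 / (2 * M ^ 2) = u * μ / 2 := by rw [hu_def]; ring
  set t : ℝ := -u with ht
  set b : ℝ := t + t ^ 2 * M / 2 with hb
  have hbneg : b ≤ 0 := by
    rw [hb, ht]
    nlinarith [mul_le_mul_of_nonneg_left huM hu.le]
  have hX_int : Integrable X P := by
    refine Integrable.mono' (integrable_const M) hXm.aestronglyMeasurable ?_
    filter_upwards [hXb] with ω hω
    rw [Real.norm_eq_abs, abs_le]; exact ⟨by linarith [hω.1, hM], hω.2⟩
  have hpt : ∀ᵐ ω ∂P, Real.exp (t * X ω) ≤ 1 + b * X ω := by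
    filter_upwards [hXb] with ω hω
    obtain ⟨h0, h1⟩ := hω
    have htx : 0 ≤ -(t * X ω) := by rw [ht]; nlinarith
    have hqd := exp_neg_le_quad htx
    rw [neg_neg] at hqd
    have hsq : (X ω) ^ 2 ≤ M * X ω := by nlinarith
    have ht2 : 0 ≤ t ^ 2 := sq_nonneg t
    calc Real.exp (t * X ω) ≤ 1 - (-(t * X ω)) + (-(t * X ω)) ^ 2 / 2 := hqd
      _ = 1 + t * X ω + t ^ 2 * (X ω) ^ 2 / 2 := by ring
      _ ≤ 1 + t * X ω + t ^ 2 * (M * X ω) / 2 := by nlinarith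
      _ = 1 + b * X ω := by rw [hb]; ring
  have hexp_int : Integrable (fun ω => Real.exp (t * X ω)) P := by
    refine Integrable.mono' (integrable_const 1) ((hXm.const_mul t).exp).aestronglyMeasurable ?_
    filter_upwards [hXb] with ω hω
    rw [Real.norm_eq_abs, abs_of_pos (Real.exp_pos _)]
    rw [show (1 : ℝ) = Real.exp 0 by simp]
    apply Real.exp_le_exp.2
    rw [ht]; nlinarith [hω.1]
  have hint : mgf X P t ≤ 1 + b * ∫ ω, X ω ∂P := by
    unfold mgf
    calc (∫ ω, Real.exp (t * X ω) ∂P) ≤ ∫ ω, (1 + b * X ω) ∂P := by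
          exact integral_mono_ae hexp_int ((integrable_const 1).add (hX_int.const_mul b)) hpt
      _ = 1 + b * ∫ ω, X ω ∂P := by
          rw [integral_add (integrable_const 1) (hX_int.const_mul b),
            integral_const, integral_const_mul]; simp
  have hbm : b * ∫ ω, X ω ∂P ≤ b * μ := mul_le_mul_of_nonpos_left hmean hbneg
  have hfin : 1 + b * μ ≤ 1 - μ ^ 2 / (2 * M ^ 2) := by
    rw [huμ, hb, ht]
    nlinarith [mul_le_mul_of_nonneg_left huM (mul_nonneg (mul_nonneg hu.le hu.le) hμ.le)]
  calc mgf X P t ≤ 1 + b * ∫ ω, X ω ∂P := hint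
    _ ≤ 1 + b * μ := by linarith
    _ ≤ 1 - μ ^ 2 / (2 * M ^ 2) := hfin


end AuxNMTB

/-- Chernoff-type moment bound, Θ(1/N^k) form: There exist constants
`C₁, C₂ > 0`, depending only on `μ, M, c, k`, such that for every `N` and every
collection of independent random variables `X_1, …, X_N` with values in `[0, M]` a.s.
and means at least `μ`,
`C₁ / N^k ≤ E[(Σ_j X_j + c)^{-k}] ≤ C₂ / N^k`. -/
theorem negative_moment_theta_bound
    (M μ c : ℝ) (hM : 0 < M) (hμ : 0 < μ) (hμM : μ ≤ M) (hc : 1 ≤ c)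
    (k : ℕ) (hk : 0 < k) :
    ∃ C₁ > (0 : ℝ), ∃ C₂ > (0 : ℝ),
      ∀ (N : ℕ), 0 < N →
      ∀ (Ω : Type) [MeasurableSpace Ω] (P : Measure Ω) [IsProbabilityMeasure P]
        (X : Fin N → Ω → ℝ),
        (∀ j, Measurable (X j)) →
        iIndepFun X P →
        (∀ j, ∀ᵐ ω ∂P, X j ω ∈ Set.Icc 0 M) →
        (∀ j, μ ≤ ∫ ω, X j ω ∂P) →
        C₁ / (N : ℝ) ^ k ≤ ∫ ω, ((∑ j, X j ω + c) ^ k)⁻¹ ∂P ∧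
        ∫ ω, ((∑ j, X j ω + c) ^ k)⁻¹ ∂P ≤ C₂ / (N : ℝ) ^ k := by
  set a : ℝ := μ ^ 2 / (2 * M ^ 2) with ha_def
  have ha : 0 < a := by positivity
  have ha2 : a ≤ 1 / 2 := by
    rw [ha_def, div_le_div_iff₀ (by positivity) (by norm_num)]
    nlinarith
  have h1a : 0 < 1 - a := by linarith
  set r : ℝ := Real.exp a * (1 - a) with hr_def
  have hr0 : 0 < r := mul_pos (Real.exp_pos _) h1a
  have hr1 : r < 1 := by
    have h1 := Real.add_one_lt_exp (x := -a) (by linarith)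
    have h2 : 1 - a < Real.exp (-a) := by linarith
    calc r = Real.exp a * (1 - a) := hr_def
      _ < Real.exp a * Real.exp (-a) := mul_lt_mul_of_pos_left h2 (Real.exp_pos _)
      _ = 1 := by rw [← Real.exp_add]; simp
  set β : ℝ := -Real.log r with hβ_def
  have hβ : 0 < β := by
    rw [hβ_def]; simpa using Real.log_neg hr0 hr1
  have hMc : 0 < M + c := by linarith
  have hfac : (0:ℝ) < (k.factorial : ℝ) := by exact_mod_cast k.factorial_pos
  refine ⟨((M + c) ^ k)⁻¹, by positivity,
    (k.factorial : ℝ) / β ^ k + (2 / μ) ^ k, ?_, ?_⟩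
  · have h1 : (0:ℝ) < (k.factorial : ℝ) / β ^ k := div_pos hfac (by positivity)
    have h2 : (0:ℝ) < (2 / μ) ^ k := by positivity
    linarith
  intro N hN Ω _ P _ X hmeas hindep hbound hmean
  have hNpos : (0:ℝ) < (N:ℝ) := by exact_mod_cast hN
  have hN1 : (1:ℝ) ≤ (N:ℝ) := by exact_mod_cast hN
  have hNk : (0:ℝ) < (N:ℝ) ^ k := by positivity
  have hae : ∀ᵐ ω ∂P, ∀ j, X j ω ∈ Set.Icc 0 M := (ae_all_iff).2 hbound
  have hSm : Measurable (fun ω => ∑ j, X j ω) :=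
    Finset.measurable_sum _ fun i _ => hmeas i
  have hSbd : ∀ᵐ ω ∂P, 0 ≤ ∑ j, X j ω ∧ ∑ j, X j ω ≤ N * M := by
    filter_upwards [hae] with ω hω
    constructor
    · exact Finset.sum_nonneg fun j _ => (hω j).1
    · calc ∑ j, X j ω ≤ ∑ _j : Fin N, M := Finset.sum_le_sum fun j _ => (hω j).2
        _ = N * M := by simp [Finset.sum_const, mul_comm]
  have hfm : Measurable (fun ω => (((∑ j, X j ω) + c) ^ k)⁻¹) :=
    ((hSm.add_const c).pow_const k).inv
  have hf_int : Integrable (fun ω => (((∑ j, X j ω) + c) ^ k)⁻¹) P := by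
    refine Integrable.mono' (integrable_const 1) hfm.aestronglyMeasurable ?_
    filter_upwards [hSbd] with ω hω
    have h1 : (1:ℝ) ≤ ∑ j, X j ω + c := by linarith [hω.1]
    have h2 : (1:ℝ) ≤ (∑ j, X j ω + c) ^ k := by
      calc (1:ℝ) = 1 ^ k := by simp
        _ ≤ (∑ j, X j ω + c) ^ k := pow_le_pow_left₀ zero_le_one h1 k
    rw [Real.norm_eq_abs, abs_of_pos (inv_pos.2 (by linarith))]
    exact inv_le_one_of_one_le₀ h2
  constructor
  · -- lower bound
    have hpt : ∀ᵐ ω ∂P, ((M + c) ^ k)⁻¹ / (N:ℝ) ^ k ≤ ((∑ j, X j ω + c) ^ k)⁻¹ := by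
      filter_upwards [hSbd] with ω hω
      have hc' : c ≤ (N:ℝ) * c := by nlinarith
      have h1 : ∑ j, X j ω + c ≤ (N:ℝ) * (M + c) := by nlinarith [hω.2]
      have h0 : (0:ℝ) < ∑ j, X j ω + c := by linarith [hω.1]
      have h2 : (∑ j, X j ω + c) ^ k ≤ ((N:ℝ) * (M + c)) ^ k :=
        pow_le_pow_left₀ h0.le h1 k
      have h3 : (((N:ℝ) * (M + c)) ^ k)⁻¹ ≤ ((∑ j, X j ω + c) ^ k)⁻¹ :=
        inv_anti₀ (by positivity) h2
      calc ((M + c) ^ k)⁻¹ / (N:ℝ) ^ k = (((N:ℝ) * (M + c)) ^ k)⁻¹ := by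
            rw [mul_pow, mul_inv, div_eq_mul_inv, mul_comm]
        _ ≤ _ := h3
    calc ((M + c) ^ k)⁻¹ / (N:ℝ) ^ k
        = ∫ _ω, ((M + c) ^ k)⁻¹ / (N:ℝ) ^ k ∂P := by simp
      _ ≤ ∫ ω, ((∑ j, X j ω + c) ^ k)⁻¹ ∂P :=
          integral_mono_ae (integrable_const _) hf_int hpt
  · -- upper bound
    set t : ℝ := -(μ / M ^ 2) with ht_def
    have ht : t ≤ 0 := by
      have : (0:ℝ) ≤ μ / M ^ 2 := by positivity
      rw [ht_def]; linarith
    have hSfun : ∀ ω : Ω, (∑ j, X j) ω = ∑ j, X j ω := by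
      intro ω; simp [Finset.sum_apply]
    have hSm' : Measurable (∑ j, X j) := by
      have he : (∑ j, X j) = fun ω => ∑ j, X j ω := funext hSfun
      rw [he]; exact hSm
    have hexp_int : Integrable (fun ω => Real.exp (t * (∑ j, X j) ω)) P := by
      refine Integrable.mono' (integrable_const 1)
        ((hSm'.const_mul t).exp).aestronglyMeasurable ?_
      filter_upwards [hSbd] with ω hω
      rw [Real.norm_eq_abs, abs_of_pos (Real.exp_pos _),
        show (1:ℝ) = Real.exp 0 by simp]
      apply Real.exp_le_exp.2
      rw [hSfun]
      have h0 : (0:ℝ) ≤ μ / M ^ 2 := by positivity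
      rw [ht_def]; nlinarith [hω.1]
    set A : Set Ω := {ω | (∑ j, X j) ω ≤ (N:ℝ) * μ / 2} with hA_def
    have hAm : MeasurableSet A := measurableSet_le hSm' measurable_const
    have hchern := measure_le_le_exp_mul_mgf (X := ∑ j, X j) (μ := P)
      ((N:ℝ) * μ / 2) ht hexp_int
    have hmgf : mgf (∑ j, X j) P t = ∏ j, mgf (X j) P t :=
      hindep.mgf_sum hmeas Finset.univ
    have hone : ∀ j, mgf (X j) P t ≤ 1 - a := by
      intro j
      rw [ht_def, ha_def]
      exact mgf_le_of_mean M μ hM hμ hμM P (X j) (hmeas j) (hbound j) (hmean j)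
    have hprod : ∏ j, mgf (X j) P t ≤ (1 - a) ^ N := by
      calc ∏ j, mgf (X j) P t ≤ ∏ _j : Fin N, (1 - a) :=
          Finset.prod_le_prod (fun j _ => mgf_nonneg) (fun j _ => hone j)
        _ = (1 - a) ^ N := by simp
    have hM0 : M ≠ 0 := hM.ne'
    have hexpt : Real.exp (-t * ((N:ℝ) * μ / 2)) = Real.exp a ^ N := by
      rw [ht_def, ha_def, ← Real.exp_nat_mul]
      congr 1
      field_simp
    have hPA : (P A).toReal ≤ r ^ N := by
      calc (P A).toReal
          ≤ Real.exp (-t * ((N:ℝ) * μ / 2)) * mgf (∑ j, X j) P t := hchern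
        _ ≤ Real.exp (-t * ((N:ℝ) * μ / 2)) * (1 - a) ^ N := by
            apply mul_le_mul_of_nonneg_left _ (Real.exp_pos _).le
            rw [hmgf]; exact hprod
        _ = r ^ N := by rw [hexpt, hr_def, mul_pow]
    have hrN : r ^ N = Real.exp (-(β * N)) := by
      rw [← Real.exp_log hr0, ← Real.exp_nat_mul]
      congr 1
      rw [hβ_def]; ring
    have hkey : r ^ N ≤ ((k.factorial:ℝ) / β ^ k) / (N:ℝ) ^ k := by
      have h1 := Real.pow_div_factorial_le_exp (x := β * N)
        (by positivity) k
      have h1' : (β * N) ^ k ≤ Real.exp (β * N) * k.factorial := by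
        rw [div_le_iff₀ hfac] at h1; exact h1
      rw [hrN, div_div, le_div_iff₀ (by positivity : (0:ℝ) < β ^ k * (N:ℝ) ^ k)]
      have h4 : Real.exp (-(β * N)) * (β * N) ^ k ≤
          Real.exp (-(β * N)) * (Real.exp (β * N) * k.factorial) :=
        mul_le_mul_of_nonneg_left h1' (Real.exp_pos _).le
      have h5 : Real.exp (-(β * N)) * (Real.exp (β * N) * (k.factorial:ℝ))
          = (k.factorial:ℝ) := by
        rw [← mul_assoc, ← Real.exp_add]; simp
      calc Real.exp (-(β * ↑N)) * (β ^ k * (N:ℝ) ^ k)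
          = Real.exp (-(β * ↑N)) * (β * ↑N) ^ k := by rw [mul_pow]
        _ ≤ Real.exp (-(β * ↑N)) * (Real.exp (β * ↑N) * k.factorial) := h4
        _ = (k.factorial:ℝ) := h5
    have hg_int : Integrable
        (fun ω => A.indicator (fun _ => (1:ℝ)) ω + (((N:ℝ) * μ / 2 + c) ^ k)⁻¹) P :=
      ((integrable_const (1:ℝ)).indicator hAm).add (integrable_const _)
    have hhalf : (0:ℝ) < (N:ℝ) * μ / 2 := by positivity
    have hpt2 : ∀ᵐ ω ∂P, ((∑ j, X j ω + c) ^ k)⁻¹ ≤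
        A.indicator (fun _ => (1:ℝ)) ω + (((N:ℝ) * μ / 2 + c) ^ k)⁻¹ := by
      filter_upwards [hSbd] with ω hω
      by_cases hmem : ω ∈ A
      · rw [Set.indicator_of_mem hmem]
        have h1 : (1:ℝ) ≤ ∑ j, X j ω + c := by linarith [hω.1]
        have h2 : (1:ℝ) ≤ (∑ j, X j ω + c) ^ k := by
          calc (1:ℝ) = 1 ^ k := by simp
            _ ≤ _ := pow_le_pow_left₀ zero_le_one h1 k
        have h3 : ((∑ j, X j ω + c) ^ k)⁻¹ ≤ 1 := inv_le_one_of_one_le₀ h2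
        have h4 : (0:ℝ) ≤ (((N:ℝ) * μ / 2 + c) ^ k)⁻¹ := by
          apply inv_nonneg.2; apply pow_nonneg; linarith
        linarith
      · rw [Set.indicator_of_notMem hmem, zero_add]
        rw [hA_def] at hmem
        simp only [Set.mem_setOf_eq, not_le, hSfun] at hmem
        have h0 : (0:ℝ) < (N:ℝ) * μ / 2 + c := by linarith
        have h1 : (N:ℝ) * μ / 2 + c ≤ ∑ j, X j ω + c := by linarith
        exact inv_anti₀ (by positivity) (pow_le_pow_left₀ h0.le h1 k)
    have hsecond : (((N:ℝ) * μ / 2 + c) ^ k)⁻¹ ≤ (2 / μ) ^ k / (N:ℝ) ^ k := by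
      have h1 : ((N:ℝ) * μ / 2) ^ k ≤ ((N:ℝ) * μ / 2 + c) ^ k :=
        pow_le_pow_left₀ hhalf.le (by linarith) k
      have h2 : (((N:ℝ) * μ / 2 + c) ^ k)⁻¹ ≤ (((N:ℝ) * μ / 2) ^ k)⁻¹ :=
        inv_anti₀ (by positivity) h1
      have h3 : (((N:ℝ) * μ / 2) ^ k)⁻¹ = (2 / μ) ^ k / (N:ℝ) ^ k := by
        rw [← inv_pow, ← div_pow]
        congr 1
        field_simp
      rw [← h3]; exact h2
    calc ∫ ω, ((∑ j, X j ω + c) ^ k)⁻¹ ∂P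
        ≤ ∫ ω, (A.indicator (fun _ => (1:ℝ)) ω + (((N:ℝ) * μ / 2 + c) ^ k)⁻¹) ∂P :=
          integral_mono_ae hf_int hg_int hpt2
      _ = (P A).toReal + (((N:ℝ) * μ / 2 + c) ^ k)⁻¹ := by
          rw [integral_add ((integrable_const (1:ℝ)).indicator hAm) (integrable_const _),
            integral_indicator_const _ hAm, integral_const]
          simp; rfl
      _ ≤ ((k.factorial:ℝ) / β ^ k) / (N:ℝ) ^ k + (2 / μ) ^ k / (N:ℝ) ^ k := by
          have := hPA.trans hkey
          linarith
      _ = ((k.factorial:ℝ) / β ^ k + (2 / μ) ^ k) / (N:ℝ) ^ k := by rw [← add_div]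
end

section
/- Let g_max > 0 and let f : [0, g_max] → ℝ be strictly convex on [0, g_max], strictly increasing, continuous, with f(0) = 0 and finite left derivative at g_max. Let c_1, c_2 > 0. Then there exists a positive integer N_1, depending only on f, g_max, c_1 and c_2, such that for every integer N ≥ N_1 and every nonnegative random variable Z satisfying E[1/(1+Z)] ≥ c_1/N and E[1/(1+Z)²] ≤ c_2/N², the following holds for all g ∈ [0, g_max]: E[log(1 + f(g)/(1+Z))] ≤ (g/g_max) · E[log(1 + f(g_max)/(1+Z))]. -/
open MeasureTheory

private lemma log1p_le (x : ℝ) (hx : 0 ≤ x) : Real.log (1 + x) ≤ x := by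
  have h := Real.log_le_sub_one_of_pos (show (0:ℝ) < 1 + x by linarith)
  linarith

private lemma le_log1p (x : ℝ) (hx : 0 ≤ x) : x - x ^ 2 ≤ Real.log (1 + x) := by
  have h1 : (0:ℝ) < 1 + x := by linarith
  have h2 := Real.log_le_sub_one_of_pos (show (0:ℝ) < (1 + x)⁻¹ by positivity)
  rw [Real.log_inv] at h2
  have h4 : 1 - (1 + x)⁻¹ - (x - x ^ 2) = x ^ 3 / (1 + x) := by
    field_simp
    ring
  have h5 : 0 ≤ x ^ 3 / (1 + x) := by positivity
  linarith

private lemma log_diff_ge (a b u : ℝ) (ha : 0 ≤ a) (hab : a ≤ b) (hu0 : 0 < u) (hu1 : u ≤ 1) :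
    (b - a) * (u - b * u ^ 2) ≤ Real.log (1 + b * u) - Real.log (1 + a * u) := by
  have h1 : (0:ℝ) < 1 + a * u := by nlinarith
  have h2 : (0:ℝ) < 1 + b * u := by nlinarith
  have h3 := Real.log_le_sub_one_of_pos (show (0:ℝ) < (1 + a * u) / (1 + b * u) by positivity)
  rw [Real.log_div h1.ne' h2.ne'] at h3
  have h4 : 1 - (1 + a * u) / (1 + b * u) - (b - a) * (u - b * u ^ 2)
      = (b - a) * (b ^ 2 * u ^ 3) / (1 + b * u) := by
    rw [eq_div_iff h2.ne']
    simp only [sub_mul, div_mul_cancel₀ _ h2.ne']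
    ring
  have h5 : 0 ≤ (b - a) * (b ^ 2 * u ^ 3) / (1 + b * u) :=
    div_nonneg (mul_nonneg (by linarith) (by positivity)) h2.le
  linarith

private lemma div_trick (x y N : ℝ) (hN : 0 < N) (h : x ≤ N * y) : x / N ^ 2 ≤ y / N := by
  rw [div_le_div_iff₀ (by positivity) hN]
  nlinarith

private lemma arith_main (gmax b m a g c₁ c₂ N A B Eu Eu2 : ℝ)
    (hgmax : 0 < gmax) (hb : 0 < b) (hm0 : 0 ≤ m) (hmb : m < b / 2)
    (ha0 : 0 ≤ a) (hab : a ≤ b)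
    (hg0 : 0 ≤ g) (hg1 : g ≤ gmax)
    (hN : 0 < N)
    (hK1 : b ^ 2 * c₂ ≤ N * ((b - 2 * m) * c₁))
    (hK2 : 2 * (b - m) * b * c₂ ≤ N * ((b - 2 * m) * c₁))
    (hK3 : b * c₂ ≤ N * c₁)
    (hc₁ : 0 < c₁) (hc₂ : 0 < c₂)
    (hEu : c₁ / N ≤ Eu) (hEu2 : Eu2 ≤ c₂ / N ^ 2) (hEu2nn : 0 ≤ Eu2)
    (hA_le : A ≤ a * Eu)
    (hB_le : B ≤ b * Eu)
    (hB_ge : b * Eu - b ^ 2 * Eu2 ≤ B)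
    (hdiff : (b - a) * (Eu - b * Eu2) ≤ B - A)
    (hconvA : g ≤ gmax / 2 → a * gmax ≤ 2 * g * m)
    (hconvB : gmax / 2 ≤ g → 2 * (b - m) * (gmax - g) ≤ (b - a) * gmax) :
    A ≤ g / gmax * B := by
  have hEupos : 0 < Eu := lt_of_lt_of_le (by positivity) hEu
  rcases le_total g (gmax / 2) with hcase | hcase
  · -- region A : g ≤ gmax/2
    have haux := hconvA hcase
    rcases eq_or_lt_of_le hg0 with h0 | h0
    · -- g = 0
      have hg' : g = 0 := h0.symm
      subst hg'
      have ha : a = 0 := by nlinarith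
      calc A ≤ a * Eu := hA_le
        _ = 0 := by rw [ha, zero_mul]
        _ = 0 / gmax * B := by rw [zero_div, zero_mul]
    · -- 0 < g
      have key : a * Eu ≤ g / gmax * (b * Eu - b ^ 2 * Eu2) := by
        rw [div_mul_eq_mul_div, le_div_iff₀ hgmax]
        have s1 : a * gmax * Eu ≤ 2 * g * m * Eu :=
          mul_le_mul_of_nonneg_right haux hEupos.le
        have e1 : b ^ 2 * Eu2 ≤ b ^ 2 * (c₂ / N ^ 2) :=
          mul_le_mul_of_nonneg_left hEu2 (sq_nonneg b)
        have e2 : b ^ 2 * c₂ / N ^ 2 ≤ (b - 2 * m) * c₁ / N := div_trick _ _ _ hN hK1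
        have e3 : (b - 2 * m) * (c₁ / N) ≤ (b - 2 * m) * Eu :=
          mul_le_mul_of_nonneg_left hEu (by linarith)
        have s2 : b ^ 2 * Eu2 ≤ (b - 2 * m) * Eu := by
          have r1 : b ^ 2 * (c₂ / N ^ 2) = b ^ 2 * c₂ / N ^ 2 := by ring
          have r2 : (b - 2 * m) * c₁ / N = (b - 2 * m) * (c₁ / N) := by ring
          linarith [e1, e2, e3]
        have s3 : g * (b ^ 2 * Eu2) ≤ g * ((b - 2 * m) * Eu) :=
          mul_le_mul_of_nonneg_left s2 h0.le
        linarith [s1, s3]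
      calc A ≤ a * Eu := hA_le
        _ ≤ g / gmax * (b * Eu - b ^ 2 * Eu2) := key
        _ ≤ g / gmax * B := mul_le_mul_of_nonneg_left hB_ge (by positivity)
  · -- region B : gmax/2 ≤ g
    have haux := hconvB hcase
    have hub : 0 ≤ Eu - b * Eu2 := by
      have e1 : b * Eu2 ≤ b * (c₂ / N ^ 2) := mul_le_mul_of_nonneg_left hEu2 hb.le
      have e2 : b * c₂ / N ^ 2 ≤ c₁ / N := div_trick _ _ _ hN hK3
      have r1 : b * (c₂ / N ^ 2) = b * c₂ / N ^ 2 := by ring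
      linarith
    have hs : 0 ≤ gmax - g := by linarith
    have inner : b * Eu ≤ 2 * (b - m) * (Eu - b * Eu2) := by
      have hbm : 0 ≤ 2 * (b - m) * b := by nlinarith
      have e1 : 2 * (b - m) * b * Eu2 ≤ 2 * (b - m) * b * (c₂ / N ^ 2) :=
        mul_le_mul_of_nonneg_left hEu2 hbm
      have e2 : 2 * (b - m) * b * c₂ / N ^ 2 ≤ (b - 2 * m) * c₁ / N := div_trick _ _ _ hN hK2
      have e3 : (b - 2 * m) * (c₁ / N) ≤ (b - 2 * m) * Eu :=
        mul_le_mul_of_nonneg_left hEu (by linarith)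
      have r1 : 2 * (b - m) * b * (c₂ / N ^ 2) = 2 * (b - m) * b * c₂ / N ^ 2 := by ring
      have r2 : (b - 2 * m) * c₁ / N = (b - 2 * m) * (c₁ / N) := by ring
      linarith [e1, e2, e3]
    have step : (gmax - g) / gmax * B ≤ B - A := by
      have t1 : (gmax - g) / gmax * B ≤ (gmax - g) / gmax * (b * Eu) :=
        mul_le_mul_of_nonneg_left hB_le (by positivity)
      have t2 : (gmax - g) / gmax * (b * Eu) ≤ (b - a) * (Eu - b * Eu2) := by
        calc (gmax - g) / gmax * (b * Eu)
            ≤ (gmax - g) / gmax * (2 * (b - m) * (Eu - b * Eu2)) :=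
              mul_le_mul_of_nonneg_left inner (by positivity)
          _ ≤ (b - a) * (Eu - b * Eu2) := by
              rw [div_mul_eq_mul_div, div_le_iff₀ hgmax]
              linarith [mul_nonneg (sub_nonneg.mpr haux) hub]
      linarith [hdiff]
    have hfrac : g / gmax * B = B - (gmax - g) / gmax * B := by
      field_simp
      ring
    linarith [step]

/-- first family of dual feasibility conditions at large `N`: For
`f : [0, g_max] → ℝ` strictly convex, strictly increasing, continuous, `f 0 = 0`,
with finite left derivative `L` at `g_max`, and constants `c₁, c₂ > 0`, there is
`N₁` (depending only on `f, g_max, c₁, c₂`) such that for all `N ≥ N₁` and every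
nonnegative random variable `Z` with `E[(1+Z)⁻¹] ≥ c₁/N` and `E[(1+Z)⁻²] ≤ c₂/N²`,
for all `g ∈ [0, g_max]`:
`E[log(1 + f g / (1+Z))] ≤ (g/g_max) E[log(1 + f g_max / (1+Z))]`. -/
theorem dual_feasibility_below_threshold
    (gmax : ℝ) (hgmax : 0 < gmax) (f : ℝ → ℝ) (L : ℝ)
    (hconv : StrictConvexOn ℝ (Set.Icc 0 gmax) f)
    (hmono : StrictMonoOn f (Set.Icc 0 gmax))
    (hcont : ContinuousOn f (Set.Icc 0 gmax))
    (hf0 : f 0 = 0)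
    (hL : Filter.Tendsto (fun g => (f gmax - f g) / (gmax - g))
      (nhdsWithin gmax (Set.Iio gmax)) (nhds L))
    (c₁ c₂ : ℝ) (hc₁ : 0 < c₁) (hc₂ : 0 < c₂) :
    ∃ N₁ : ℕ, 0 < N₁ ∧
      ∀ N : ℕ, N₁ ≤ N →
      ∀ (Ω : Type) [MeasurableSpace Ω] (P : Measure Ω) [IsProbabilityMeasure P]
        (Z : Ω → ℝ), Measurable Z → (∀ᵐ ω ∂P, 0 ≤ Z ω) →
        c₁ / (N : ℝ) ≤ ∫ ω, (1 + Z ω)⁻¹ ∂P →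
        ∫ ω, ((1 + Z ω) ^ 2)⁻¹ ∂P ≤ c₂ / (N : ℝ) ^ 2 →
        ∀ g ∈ Set.Icc 0 gmax,
          ∫ ω, Real.log (1 + f g / (1 + Z ω)) ∂P
            ≤ (g / gmax) * ∫ ω, Real.log (1 + f gmax / (1 + Z ω)) ∂P := by
  have h0mem : (0:ℝ) ∈ Set.Icc 0 gmax := Set.mem_Icc.mpr ⟨le_refl 0, hgmax.le⟩
  have hGmem : gmax ∈ Set.Icc 0 gmax := Set.mem_Icc.mpr ⟨hgmax.le, le_refl gmax⟩
  have hMmem : gmax / 2 ∈ Set.Icc 0 gmax := Set.mem_Icc.mpr ⟨by linarith, by linarith⟩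
  set b := f gmax with hbdef
  set m := f (gmax / 2) with hmdef
  have hb : 0 < b := by
    have h := hmono h0mem hGmem hgmax
    rwa [hf0] at h
  have hm0 : 0 ≤ m := by
    have h := hmono.monotoneOn h0mem hMmem (by linarith)
    rwa [hf0] at h
  have hmb : m < b / 2 := by
    have h := hconv.2 h0mem hGmem hgmax.ne (show (0:ℝ) < 1/2 by norm_num)
      (show (0:ℝ) < 1/2 by norm_num) (by norm_num)
    have e : (1/2 : ℝ) • (0:ℝ) + (1/2 : ℝ) • gmax = gmax / 2 := by
      simp only [smul_eq_mul, mul_zero, zero_add]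
      ring
    rw [e] at h
    simp only [smul_eq_mul, hf0, mul_zero, zero_add] at h
    rw [← hmdef, ← hbdef] at h
    linarith
  have hb2m : 0 < b - 2 * m := by linarith
  refine ⟨⌈b ^ 2 * c₂ / ((b - 2 * m) * c₁)⌉₊ + ⌈2 * (b - m) * b * c₂ / ((b - 2 * m) * c₁)⌉₊
    + ⌈b * c₂ / c₁⌉₊ + 1, Nat.succ_pos _, ?_⟩
  intro N hN Ω _ P _ Z hZm hZ0 hE1 hE2 g hg
  have hN0 : 0 < N := by omega
  have hNR : (0:ℝ) < (N : ℝ) := by exact_mod_cast hN0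
  have hcast : ∀ x : ℝ, ⌈x⌉₊ ≤ N → x ≤ (N : ℝ) := fun x hx =>
    le_trans (Nat.le_ceil x) (by exact_mod_cast hx)
  have hK1 : b ^ 2 * c₂ ≤ (N:ℝ) * ((b - 2 * m) * c₁) := by
    have h := hcast (b ^ 2 * c₂ / ((b - 2 * m) * c₁)) (by omega)
    rw [div_le_iff₀ (by positivity)] at h
    linarith
  have hK2 : 2 * (b - m) * b * c₂ ≤ (N:ℝ) * ((b - 2 * m) * c₁) := by
    have h := hcast (2 * (b - m) * b * c₂ / ((b - 2 * m) * c₁)) (by omega)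
    rw [div_le_iff₀ (by positivity)] at h
    linarith
  have hK3 : b * c₂ ≤ (N:ℝ) * c₁ := by
    have h := hcast (b * c₂ / c₁) (by omega)
    rw [div_le_iff₀ hc₁] at h
    linarith
  -- basic facts about u = (1+Z)⁻¹
  have hum : Measurable (fun ω => (1 + Z ω)⁻¹) := (measurable_const.add hZm).inv
  have hu_ae : ∀ᵐ ω ∂P, 0 < (1 + Z ω)⁻¹ ∧ (1 + Z ω)⁻¹ ≤ 1 := by
    filter_upwards [hZ0] with ω h
    constructor
    · exact inv_pos.mpr (by linarith)
    · exact inv_le_one_of_one_le₀ (by linarith)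
  have hint_u : Integrable (fun ω => (1 + Z ω)⁻¹) P := by
    refine Integrable.mono' (integrable_const 1) hum.aestronglyMeasurable ?_
    filter_upwards [hu_ae] with ω h
    rw [Real.norm_eq_abs, abs_of_pos h.1]
    exact h.2
  have hint_u2 : Integrable (fun ω => ((1 + Z ω)⁻¹) ^ 2) P := by
    refine Integrable.mono' (integrable_const 1) (hum.pow_const 2).aestronglyMeasurable ?_
    filter_upwards [hu_ae] with ω h
    rw [Real.norm_eq_abs, abs_of_pos (pow_pos h.1 2)]
    exact pow_le_one₀ h.1.le h.2
  have hint_log : ∀ t : ℝ, 0 ≤ t →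
      Integrable (fun ω => Real.log (1 + t * (1 + Z ω)⁻¹)) P := by
    intro t ht
    refine Integrable.mono' (integrable_const t)
      ((measurable_const.add (hum.const_mul t)).log).aestronglyMeasurable ?_
    filter_upwards [hu_ae] with ω h
    have h1 : 0 ≤ t * (1 + Z ω)⁻¹ := mul_nonneg ht h.1.le
    rw [Real.norm_eq_abs, abs_of_nonneg (Real.log_nonneg (by linarith))]
    calc Real.log (1 + t * (1 + Z ω)⁻¹) ≤ t * (1 + Z ω)⁻¹ := log1p_le _ h1
      _ ≤ t * 1 := mul_le_mul_of_nonneg_left h.2 ht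
      _ = t := mul_one t
  -- nonnegativity / monotonicity facts about f g
  have ha0 : 0 ≤ f g := by
    have h := hmono.monotoneOn h0mem hg hg.1
    rwa [hf0] at h
  have hab : f g ≤ b := hmono.monotoneOn hg hGmem hg.2
  -- rewrite the goal with multiplication
  simp_rw [div_eq_mul_inv]
  simp_rw [← inv_pow] at hE2
  -- integral comparison facts
  have hEu2nn : (0:ℝ) ≤ ∫ ω, ((1 + Z ω)⁻¹) ^ 2 ∂P := integral_nonneg fun ω => sq_nonneg _
  have hA_le : ∫ ω, Real.log (1 + f g * (1 + Z ω)⁻¹) ∂P ≤ f g * ∫ ω, (1 + Z ω)⁻¹ ∂P := by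
    rw [← integral_const_mul]
    refine integral_mono_ae (hint_log _ ha0) (hint_u.const_mul _) ?_
    filter_upwards [hu_ae] with ω h
    exact log1p_le _ (mul_nonneg ha0 h.1.le)
  have hB_le : ∫ ω, Real.log (1 + b * (1 + Z ω)⁻¹) ∂P ≤ b * ∫ ω, (1 + Z ω)⁻¹ ∂P := by
    rw [← integral_const_mul]
    refine integral_mono_ae (hint_log _ hb.le) (hint_u.const_mul _) ?_
    filter_upwards [hu_ae] with ω h
    exact log1p_le _ (mul_nonneg hb.le h.1.le)
  have hB_ge : b * (∫ ω, (1 + Z ω)⁻¹ ∂P) - b ^ 2 * ∫ ω, ((1 + Z ω)⁻¹) ^ 2 ∂P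
      ≤ ∫ ω, Real.log (1 + b * (1 + Z ω)⁻¹) ∂P := by
    have hint_lhs : Integrable (fun ω => b * (1 + Z ω)⁻¹ - b ^ 2 * ((1 + Z ω)⁻¹) ^ 2) P :=
      (hint_u.const_mul b).sub (hint_u2.const_mul (b ^ 2))
    have h := integral_mono_ae hint_lhs (hint_log b hb.le) ?_
    · rwa [integral_sub (hint_u.const_mul b) (hint_u2.const_mul (b ^ 2)),
        integral_const_mul, integral_const_mul] at h
    · filter_upwards [hu_ae] with ω h
      have h6 := le_log1p (b * (1 + Z ω)⁻¹) (mul_nonneg hb.le h.1.le)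
      calc b * (1 + Z ω)⁻¹ - b ^ 2 * ((1 + Z ω)⁻¹) ^ 2
          = b * (1 + Z ω)⁻¹ - (b * (1 + Z ω)⁻¹) ^ 2 := by ring
        _ ≤ _ := h6
  have hdiff : (b - f g) * ((∫ ω, (1 + Z ω)⁻¹ ∂P) - b * ∫ ω, ((1 + Z ω)⁻¹) ^ 2 ∂P)
      ≤ (∫ ω, Real.log (1 + b * (1 + Z ω)⁻¹) ∂P)
        - ∫ ω, Real.log (1 + f g * (1 + Z ω)⁻¹) ∂P := by
    have hintd : Integrable (fun ω => (1 + Z ω)⁻¹ - b * ((1 + Z ω)⁻¹) ^ 2) P :=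
      hint_u.sub (hint_u2.const_mul b)
    have h := integral_mono_ae (hintd.const_mul (b - f g))
      ((hint_log b hb.le).sub (hint_log _ ha0)) ?_
    · simp only [Pi.sub_apply] at h
      rw [integral_sub (hint_log b hb.le) (hint_log _ ha0)] at h
      rwa [integral_const_mul, integral_sub hint_u (hint_u2.const_mul b), integral_const_mul] at h
    · filter_upwards [hu_ae] with ω h
      simp only [Pi.sub_apply]
      exact log_diff_ge (f g) b ((1 + Z ω)⁻¹) ha0 hab h.1 h.2
  -- convexity facts
  have hconvA : g ≤ gmax / 2 → f g * gmax ≤ 2 * g * m := by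
    intro hcase
    have ht0 : (0:ℝ) ≤ 2 * g / gmax := div_nonneg (by linarith [hg.1]) hgmax.le
    have ht1 : (0:ℝ) ≤ 1 - 2 * g / gmax := by
      have : 2 * g / gmax ≤ 1 := by rw [div_le_one hgmax]; linarith
      linarith
    have hc := hconv.convexOn.2 hMmem h0mem ht0 ht1 (by ring)
    rw [smul_eq_mul, smul_eq_mul, smul_eq_mul, smul_eq_mul] at hc
    have harg : 2 * g / gmax * (gmax / 2) + (1 - 2 * g / gmax) * 0 = g := by
      field_simp
      ring
    rw [harg, hf0, mul_zero, add_zero, ← hmdef] at hc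
    have h7 := mul_le_mul_of_nonneg_right hc hgmax.le
    calc f g * gmax ≤ 2 * g / gmax * m * gmax := h7
      _ = 2 * g * m := by field_simp
  have hconvB : gmax / 2 ≤ g → 2 * (b - m) * (gmax - g) ≤ (b - f g) * gmax := by
    intro hcase
    have ht0 : (0:ℝ) ≤ 2 * (gmax - g) / gmax := by
      have : 0 ≤ gmax - g := by linarith [hg.2]
      positivity
    have ht1 : (0:ℝ) ≤ 1 - 2 * (gmax - g) / gmax := by
      have : 2 * (gmax - g) / gmax ≤ 1 := by rw [div_le_one hgmax]; linarith
      linarith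
    have hc := hconv.convexOn.2 hMmem hGmem ht0 ht1 (by ring)
    rw [smul_eq_mul, smul_eq_mul, smul_eq_mul, smul_eq_mul] at hc
    have harg : 2 * (gmax - g) / gmax * (gmax / 2) + (1 - 2 * (gmax - g) / gmax) * gmax = g := by
      field_simp
      ring
    rw [harg, ← hmdef, ← hbdef] at hc
    have h7 := mul_le_mul_of_nonneg_right hc hgmax.le
    have expand : (2 * (gmax - g) / gmax * m + (1 - 2 * (gmax - g) / gmax) * b) * gmax
        = 2 * (gmax - g) * m + (2 * g - gmax) * b := by
      have e : 2 * (gmax - g) / gmax * gmax = 2 * (gmax - g) := div_mul_cancel₀ _ hgmax.ne'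
      linear_combination (m - b) * e
    rw [expand] at h7
    nlinarith [h7]
  exact arith_main gmax b m (f g) g c₁ c₂ (N:ℝ)
    (∫ ω, Real.log (1 + f g * (1 + Z ω)⁻¹) ∂P)
    (∫ ω, Real.log (1 + b * (1 + Z ω)⁻¹) ∂P)
    (∫ ω, (1 + Z ω)⁻¹ ∂P) (∫ ω, ((1 + Z ω)⁻¹) ^ 2 ∂P)
    hgmax hb hm0 hmb ha0 hab hg.1 hg.2 hNR hK1 hK2 hK3 hc₁ hc₂
    hE1 hE2 hEu2nn hA_le hB_le hB_ge hdiff hconvA hconvB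
end
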